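/- For every ε ≠ 0 and every t ∈ ℝ, the function s ↦ h(ε,s) is differentiable at t with derivative equal to min(1, max(0, t/|ε|)); in particular this derivative lies in the interval [0,1]. -/

import Mathlib

/-- The Huber smoothing function `h(ε,t)`: for `ε ≠ 0` it equals `t - |ε|/2` if `t > |ε|`,
`t²/(2|ε|)` if `0 ≤ t ≤ |ε|`, and `0` if `t < 0`; and `h(0,t) = max 0 t`. -/
noncomputable def huber (ε t : ℝ) : ℝ :=
  if ε = 0 then max 0 t
  else if |ε| < t then t - |ε| / 2
  else if 0 ≤ t then t ^ 2 / (2 * |ε|)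
  else 0

lemma huber_eq_high {ε t : ℝ} (hε : ε ≠ 0) (h : |ε| < t) : huber ε t = t - |ε| / 2 := by
  simp [huber, hε, h]

lemma huber_eq_mid {ε t : ℝ} (hε : ε ≠ 0) (h0 : 0 ≤ t) (h1 : t ≤ |ε|) :
    huber ε t = t ^ 2 / (2 * |ε|) := by
  simp [huber, hε, not_lt.2 h1, h0]

lemma huber_eq_low {ε t : ℝ} (hε : ε ≠ 0) (h : t < 0) : huber ε t = 0 := by
  simp [huber, hε, not_lt.2 (le_of_lt (h.trans_le (abs_nonneg ε))), not_le.2 h]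

lemma mid_hasDerivAt {ε : ℝ} (hε : ε ≠ 0) (s : ℝ) :
    HasDerivAt (fun x : ℝ => x ^ 2 / (2 * |ε|)) (s / |ε|) s := by
  have hc : |ε| ≠ 0 := abs_ne_zero.2 hε
  have := (hasDerivAt_pow 2 s).div_const (2 * |ε|)
  refine this.congr_deriv ?_
  field_simp
  ring

theorem huber_hasDerivAt_snd (ε t : ℝ) (hε : ε ≠ 0) :
    HasDerivAt (fun s => huber ε s) (min 1 (max 0 (t / |ε|))) t ∧
      0 ≤ min 1 (max 0 (t / |ε|)) ∧ min 1 (max 0 (t / |ε|)) ≤ 1 := by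
  have hc : 0 < |ε| := abs_pos.2 hε
  refine ⟨?_, le_min zero_le_one (le_max_left _ _), min_le_left _ _⟩
  rcases lt_trichotomy t 0 with ht | rfl | ht
  · -- t < 0
    have hd : min 1 (max 0 (t / |ε|)) = 0 := by
      rw [max_eq_left (le_of_lt (div_neg_of_neg_of_pos ht hc)), min_eq_right zero_le_one]
    rw [hd]
    have heq : (fun s => huber ε s) =ᶠ[nhds t] (fun _ => (0:ℝ)) := by
      filter_upwards [Iio_mem_nhds ht] with s hs
      exact huber_eq_low hε hs
    exact (hasDerivAt_const t 0).congr_of_eventuallyEq heq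
  · -- t = 0
    have hd : min 1 (max 0 ((0:ℝ) / |ε|)) = 0 := by simp
    rw [hd]
    have h00 : huber ε 0 = 0 := by rw [huber_eq_mid hε le_rfl hc.le]; simp
    have hleft : HasDerivWithinAt (fun s => huber ε s) 0 (Set.Iic 0) 0 := by
      refine ((hasDerivAt_const (0:ℝ) (0:ℝ)).hasDerivWithinAt).congr ?_ h00
      intro s hs
      rcases lt_or_eq_of_le (Set.mem_Iic.mp hs) with h | rfl
      · exact huber_eq_low hε h
      · exact h00
    have hright : HasDerivWithinAt (fun s => huber ε s) 0 (Set.Ici 0) 0 := by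
      have h0 : HasDerivWithinAt (fun x : ℝ => x ^ 2 / (2 * |ε|)) 0 (Set.Ici 0) 0 := by
        have := (mid_hasDerivAt hε 0).hasDerivWithinAt (s := Set.Ici 0)
        rwa [zero_div] at this
      refine h0.congr_of_eventuallyEq ?_ (by simpa using h00)
      filter_upwards [nhdsWithin_le_nhds (Iio_mem_nhds hc), self_mem_nhdsWithin] with s h1 h2
      exact huber_eq_mid hε h2 h1.le
    have := hleft.union hright
    rwa [Set.Iic_union_Ici, hasDerivWithinAt_univ] at this
  · rcases lt_trichotomy t |ε| with ht2 | rfl | ht2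
    · -- 0 < t < |ε|
      have hd : min 1 (max 0 (t / |ε|)) = t / |ε| := by
        rw [max_eq_right (le_of_lt (div_pos ht hc)),
          min_eq_right (le_of_lt ((div_lt_one hc).2 ht2))]
      rw [hd]
      refine (mid_hasDerivAt hε t).congr_of_eventuallyEq ?_
      filter_upwards [Iio_mem_nhds ht2, Ioi_mem_nhds ht] with s h1 h2
      exact huber_eq_mid hε h2.le h1.le
    · -- t = |ε|
      have hd : min 1 (max 0 (|ε| / |ε|)) = 1 := by
        rw [div_self hc.ne', max_eq_right zero_le_one, min_self]
      rw [hd]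
      have key : ∀ a : ℝ, a ≠ 0 → a ^ 2 / (2 * a) = a - a / 2 := by
        intro a ha; field_simp; ring
      have hcc : huber ε |ε| = |ε| - |ε| / 2 := by
        rw [huber_eq_mid hε hc.le le_rfl, key _ hc.ne']
      have hleft : HasDerivWithinAt (fun s => huber ε s) 1 (Set.Iic |ε|) |ε| := by
        have h0 : HasDerivWithinAt (fun x : ℝ => x ^ 2 / (2 * |ε|)) 1 (Set.Iic |ε|) |ε| := by
          have := (mid_hasDerivAt hε |ε|).hasDerivWithinAt (s := Set.Iic |ε|)
          rwa [div_self hc.ne'] at this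
        refine h0.congr_of_eventuallyEq ?_ (huber_eq_mid hε hc.le le_rfl)
        filter_upwards [nhdsWithin_le_nhds (Ioi_mem_nhds hc), self_mem_nhdsWithin] with s h1 h2
        exact huber_eq_mid hε h1.le h2
      have hright : HasDerivWithinAt (fun s => huber ε s) 1 (Set.Ici |ε|) |ε| := by
        have h0 : HasDerivWithinAt (fun x : ℝ => x - |ε| / 2) 1 (Set.Ici |ε|) |ε| :=
          ((hasDerivAt_id |ε|).sub_const (|ε| / 2)).hasDerivWithinAt
        refine h0.congr ?_ hcc
        intro s hs
        rcases lt_or_eq_of_le (Set.mem_Ici.mp hs) with h | rfl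
        · exact huber_eq_high hε h
        · exact hcc
      have := hleft.union hright
      rwa [Set.Iic_union_Ici, hasDerivWithinAt_univ] at this
    · -- t > |ε|
      have hd : min 1 (max 0 (t / |ε|)) = 1 := by
        rw [max_eq_right (le_of_lt (div_pos ht hc)),
          min_eq_left (le_of_lt ((one_lt_div hc).2 ht2))]
      rw [hd]
      refine (((hasDerivAt_id t).sub_const (|ε| / 2))).congr_of_eventuallyEq ?_
      filter_upwards [Ioi_mem_nhds ht2] with s hs
      exact huber_eq_high hε hs
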